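/- The circulant graph W_{13;1,5} is 4-stable: for every set M of at most 4 vertices, the induced subgraph on the complement of M still has independence number 4 (equal to that of the whole graph). -/

import Mathlib

set_option maxRecDepth 8000


/-- A set of vertices is independent if no two of its elements are adjacent. -/
def SimpleGraph.IsIndepSet' {V : Type*} (G : SimpleGraph V) (s : Set V) : Prop :=
  s.Pairwise fun a b => ¬ G.Adj a b

/-- The independence number of a graph. -/
noncomputable def indepNum {V : Type*} (G : SimpleGraph V) : ℕ :=
  sSup {n | ∃ s : Set V, SimpleGraph.IsIndepSet' G s ∧ s.ncard = n}

/-- The closed neighbourhood `B(v;1) = {v} ∪ N(v)`. -/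
def ball {V : Type*} (G : SimpleGraph V) (v : V) : Set V :=
  insert v (G.neighborSet v)


/-- The circulant graph \`W_{13;1,5}\` on \`ZMod 13\`: \`x\` and \`y\` are adjacent iff
\`x - y ≡ ±1\` or \`±5 (mod 13)\`. -/
def W13 : SimpleGraph (ZMod 13) :=
  SimpleGraph.fromRel fun x y => x - y = 1 ∨ x - y = 5

def adj13 (x y : ZMod 13) : Prop :=
  x ≠ y ∧ ((x - y = 1 ∨ x - y = 5) ∨ (y - x = 1 ∨ y - x = 5))

instance : DecidableRel adj13 := fun _ _ => instDecidableAnd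

instance zmodLO : LinearOrder (ZMod 13) := inferInstanceAs (LinearOrder (Fin 13))

lemma W13_adj_iff (x y : ZMod 13) : W13.Adj x y ↔ adj13 x y := by
  simp only [W13, SimpleGraph.fromRel_adj, adj13]

def L : List (List (ZMod 13)) :=
  [[0,2,4,6],[1,3,5,7],[1,8,10,12],[0,7,9,11],[2,5,8,11],[3,6,9,12],[4,6,8,10],
   [2,5,9,12],[0,3,7,10],[1,4,7,11],[0,2,9,11],[1,3,5,12],[0,3,6,9],[1,4,8,10],
   [0,4,6,10],[1,5,8,12],[2,5,9,11],[3,5,9,12],[0,2,6,9],[0,3,7,9],[0,4,7,11],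
   [1,3,7,10],[1,5,7,11],[2,4,8,11],[2,6,8,12],[3,6,10,12]]

lemma L_indep : ∀ l ∈ L, ∀ a ∈ l, ∀ b ∈ l, ¬ adj13 a b := by decide

lemma L_card : ∀ l ∈ L, l.length = 4 ∧ l.Nodup := by decide

lemma tuple5 : ∀ a b : ZMod 13, a < b → ∀ c, b < c → ∀ d, c < d → ∀ e, d < e →
    (adj13 a b ∨ adj13 a c ∨ adj13 a d ∨ adj13 a e ∨ adj13 b c ∨ adj13 b d ∨
     adj13 b e ∨ adj13 c d ∨ adj13 c e ∨ adj13 d e) := by decide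

lemma cover : ∀ a b : ZMod 13, a ≤ b → ∀ c, b ≤ c → ∀ d, c ≤ d →
    ∃ l ∈ L, a ∉ l ∧ b ∉ l ∧ c ∉ l ∧ d ∉ l := by decide

/-- any independent set in W13 has at most 4 elements -/
lemma list5 {α : Type*} (l : List α) (h : l.length = 5) :
    ∃ a b c d e, l = [a, b, c, d, e] := by
  rcases l with _|⟨a,_|⟨b,_|⟨c,_|⟨d,_|⟨e,_|⟨f,r⟩⟩⟩⟩⟩⟩ <;>
    first
      | exact ⟨_,_,_,_,_,rfl⟩
      | (exfalso; simp at h)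

lemma list4 {α : Type*} (l : List α) (h : l.length = 4) :
    ∃ a b c d, l = [a, b, c, d] := by
  rcases l with _|⟨a,_|⟨b,_|⟨c,_|⟨d,_|⟨e,r⟩⟩⟩⟩⟩ <;>
    first
      | exact ⟨_,_,_,_,rfl⟩
      | (exfalso; simp at h)

lemma W13_indep_le (S : Set (ZMod 13)) (hS : S.Pairwise fun a b => ¬ W13.Adj a b) :
    S.ncard ≤ 4 := by
  by_contra h
  push_neg at h
  obtain ⟨t, htS, htc⟩ := Set.exists_subset_card_eq (show 5 ≤ S.ncard from h)
  have hfin : t.Finite := Set.toFinite t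
  have hcard : hfin.toFinset.card = 5 := by
    rw [← Set.ncard_eq_toFinset_card _ hfin]; exact htc
  have hlen : (hfin.toFinset.sort (· ≤ ·)).length = 5 := by
    rw [Finset.length_sort]; exact hcard
  have hsorted := (Finset.sortedLT_sort hfin.toFinset).pairwise
  have hmem : ∀ x ∈ hfin.toFinset.sort (· ≤ ·), x ∈ S := by
    intro x hx
    exact htS (hfin.mem_toFinset.mp ((Finset.mem_sort _).mp hx))
  obtain ⟨a, b, c, d, e, hl⟩ := list5 _ hlen
  rw [hl] at hsorted hmem
  simp only [List.pairwise_cons, List.mem_cons, List.not_mem_nil, or_false] at hsorted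
  have hab : a < b := hsorted.1 b (by simp)
  have hbc : b < c := hsorted.2.1 c (by simp)
  have hcd : c < d := hsorted.2.2.1 d (by simp)
  have hde : d < e := hsorted.2.2.2.1 e (by simp)
  have ha : a ∈ S := hmem a (by simp)
  have hb : b ∈ S := hmem b (by simp)
  have hc : c ∈ S := hmem c (by simp)
  have hd : d ∈ S := hmem d (by simp)
  have he : e ∈ S := hmem e (by simp)
  have := tuple5 a b hab c hbc d hcd e hde
  rcases this with h'|h'|h'|h'|h'|h'|h'|h'|h'|h'
  · exact hS ha hb h'.1 ((W13_adj_iff _ _).mpr h')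
  · exact hS ha hc h'.1 ((W13_adj_iff _ _).mpr h')
  · exact hS ha hd h'.1 ((W13_adj_iff _ _).mpr h')
  · exact hS ha he h'.1 ((W13_adj_iff _ _).mpr h')
  · exact hS hb hc h'.1 ((W13_adj_iff _ _).mpr h')
  · exact hS hb hd h'.1 ((W13_adj_iff _ _).mpr h')
  · exact hS hb he h'.1 ((W13_adj_iff _ _).mpr h')
  · exact hS hc hd h'.1 ((W13_adj_iff _ _).mpr h')
  · exact hS hc he h'.1 ((W13_adj_iff _ _).mpr h')
  · exact hS hd he h'.1 ((W13_adj_iff _ _).mpr h')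

theorem W13_four_stable (M : Set (ZMod 13)) (hM : M.ncard ≤ 4) :
    indepNum (W13.induce Mᶜ) = 4 := by
  have key1 : ∀ n ∈ {n | ∃ s : Set ↥Mᶜ, (W13.induce Mᶜ).IsIndepSet' s ∧ s.ncard = n},
      n ≤ 4 := by
    rintro n ⟨s, hs, rfl⟩
    rw [← Set.ncard_image_of_injective s Subtype.val_injective]
    apply W13_indep_le
    rintro _ ⟨x, hx, rfl⟩ _ ⟨y, hy, rfl⟩ hne hadj
    exact hs hx hy (fun h => hne (congrArg _ h)) hadj
  have key2 : 4 ∈ {n | ∃ s : Set ↥Mᶜ, (W13.induce Mᶜ).IsIndepSet' s ∧ s.ncard = n} := by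
    -- build a finset of card 4 containing M
    have hMfin : M.Finite := Set.toFinite M
    have hm : hMfin.toFinset.card ≤ 4 := by
      rw [← Set.ncard_eq_toFinset_card _ hMfin]; exact hM
    obtain ⟨m', hsub, hm'⟩ := Finset.exists_superset_card_eq hm
      (by rw [ZMod.card]; norm_num)
    have hlen : (m'.sort (· ≤ ·)).length = 4 := by rw [Finset.length_sort]; exact hm'
    have hsorted := Finset.pairwise_sort m' (· ≤ ·)
    have hmem : ∀ x ∈ M, x ∈ m'.sort (· ≤ ·) := by
      intro x hx
      exact (Finset.mem_sort _).mpr (hsub (hMfin.mem_toFinset.mpr hx))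
    obtain ⟨a, b, c, d, hl⟩ := list4 _ hlen
    rw [hl] at hsorted hmem
    simp only [List.pairwise_cons, List.mem_cons, List.not_mem_nil, or_false] at hsorted
    have hab : a ≤ b := hsorted.1 b (by simp)
    have hbc : b ≤ c := hsorted.2.1 c (by simp)
    have hcd : c ≤ d := hsorted.2.2.1 d (by simp)
    obtain ⟨l, hlL, hal, hbl, hcl, hdl⟩ := cover a b hab c hbc d hcd
    -- l is disjoint from M
    have hlM : ∀ x ∈ l, x ∈ Mᶜ := by
      intro x hx hxM
      have hx4 := hmem x hxM
      simp only [List.mem_cons, List.not_mem_nil, or_false] at hx4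
      rcases hx4 with rfl | rfl | rfl | rfl
      · exact hal hx
      · exact hbl hx
      · exact hcl hx
      · exact hdl hx
    refine ⟨Subtype.val ⁻¹' {x | x ∈ l}, ?_, ?_⟩
    · rintro x hx y hy hne hadj
      exact L_indep l hlL x hx y hy ((W13_adj_iff _ _).mp hadj)
    · have himg : Subtype.val '' (Subtype.val ⁻¹' {x | x ∈ l} : Set ↥Mᶜ) = {x | x ∈ l} := by
        rw [Set.image_preimage_eq_inter_range, Subtype.range_coe]
        exact Set.inter_eq_left.mpr hlM
      rw [← Set.ncard_image_of_injective _ Subtype.val_injective, himg]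
      have : ({x | x ∈ l} : Set (ZMod 13)) = ↑l.toFinset := by
        rw [List.coe_toFinset]
      rw [this, Set.ncard_coe_finset, List.toFinset_card_of_nodup (L_card l hlL).2,
        (L_card l hlL).1]
  refine le_antisymm (csSup_le ⟨4, key2⟩ key1) (le_csSup ⟨4, key1⟩ key2)
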